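/- Let X ⊂ Y be finite index sets, let (D_i)_{i∈Y} be sets, and let T be a nonempty finite set of tuples in Π_{i∈Y} D_i. For a subset S ⊆ T and a tuple t_X ∈ Π_{i∈X} D_i, let deg_S(t_X) := |{ s ∈ S : Π_X(s) = t_X }|. Then T can be partitioned into at most 2·(⌊log₂|T|⌋ + 1) pairwise disjoint sub-tables T⁽¹⁾,…,T⁽ᵏ⁾ whose union is T, such that for every j, |Π_X(T⁽ʲ⁾)| · max_{t_X ∈ Π_X(T⁽ʲ⁾)} deg_{T⁽ʲ⁾}(t_X) ≤ |T|. -/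

import Mathlib

open scoped Classical

/-- **Partition lemma (degree-uniformization).**
Let `X` be a proper subset of the finite index set `ι` and `T` a nonempty
finite set of tuples over `ι`.  Then `T` can be partitioned into at most
`2·(⌊log₂ |T|⌋ + 1)` pairwise disjoint sub-tables such that for every part
`T⁽ʲ⁾`, the number of distinct `X`-projections of `T⁽ʲ⁾` times the maximum
`X`-degree within `T⁽ʲ⁾` is at most `|T|`. -/
theorem partition_lemma {ι : Type*} [Fintype ι] {D : ι → Type*}
    (X : Finset ι) (hX : X ⊂ Finset.univ)
    (T : Finset ((i : ι) → D i)) (hT : T.Nonempty) :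
    ∃ (k : ℕ) (parts : Fin k → Finset ((i : ι) → D i)),
      k ≤ 2 * (Nat.log 2 T.card + 1) ∧
      (∀ j j' : Fin k, j ≠ j' → Disjoint (parts j) (parts j')) ∧
      (∀ t, t ∈ T ↔ ∃ j, t ∈ parts j) ∧
      (∀ j : Fin k,
        ((parts j).image (fun t => fun i : {x // x ∈ X} => t i.1)).card *
          ((parts j).image (fun t => fun i : {x // x ∈ X} => t i.1)).sup
            (fun tX => ((parts j).filter
              (fun s => (fun i : {x // x ∈ X} => s i.1) = tX)).card)
        ≤ T.card) := by
  classical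
  set N := T.card with hNdef
  set L := Nat.log 2 N with hLdef
  set proj : ((i : ι) → D i) → ((i : {x // x ∈ X}) → D i.1) :=
    fun t => fun i : {x // x ∈ X} => t i.1 with hproj
  set degT : ((i : {x // x ∈ X}) → D i.1) → ℕ :=
    fun tX => (T.filter fun s => proj s = tX).card with hdeg
  set bidx : ((i : ι) → D i) → ℕ := fun t => Nat.log 2 (N / degT (proj t)) with hbidx
  set Cls : ℕ → Finset ((i : {x // x ∈ X}) → D i.1) :=
    fun j => (T.filter fun t => bidx t = j).image proj with hClsdef
  set idx : ℕ → ((i : {x // x ∈ X}) → D i.1) → ℕ :=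
    fun j tX => (Cls j).toList.idxOf tX with hidxdef
  have hdeg_pos : ∀ t ∈ T, 0 < degT (proj t) := fun t ht =>
    Finset.card_pos.2 ⟨t, Finset.mem_filter.2 ⟨ht, rfl⟩⟩
  have hdeg_le : ∀ tX, degT tX ≤ N := fun tX => Finset.card_filter_le _ _
  have hb_le : ∀ t ∈ T, bidx t ≤ L := fun t ht =>
    Nat.log_mono_right (Nat.div_le_self _ _)
  have hmul_le : ∀ t ∈ T, degT (proj t) * 2 ^ bidx t ≤ N := by
    intro t ht
    have hd : 0 < degT (proj t) := hdeg_pos t ht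
    have h1 : 2 ^ bidx t ≤ N / degT (proj t) :=
      Nat.pow_log_le_self 2 (Nat.div_pos (hdeg_le _) hd).ne'
    have h2 := (Nat.le_div_iff_mul_le hd).1 h1
    rw [mul_comm]
    exact h2
  have hlt : ∀ t ∈ T, N < 2 ^ (bidx t + 1) * degT (proj t) := by
    intro t ht
    have hd : 0 < degT (proj t) := hdeg_pos t ht
    have h1 : N / degT (proj t) < 2 ^ (bidx t + 1) :=
      Nat.lt_pow_succ_log_self one_lt_two _
    exact (Nat.div_lt_iff_lt_mul hd).1 h1
  -- sum of degrees over any class collection is ≤ N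
  have hNsum : N = ∑ tX ∈ T.image proj, degT tX :=
    Finset.card_eq_sum_card_fiberwise (fun x hx => Finset.mem_image_of_mem _ hx)
  have hCls_sub : ∀ j, Cls j ⊆ T.image proj := fun j =>
    Finset.image_subset_image (Finset.filter_subset _ _)
  have hCls_lt : ∀ j, (Cls j).card < 2 ^ (j + 1) := by
    intro j
    have hsum : ∑ tX ∈ Cls j, degT tX ≤ N := by
      rw [hNsum]
      exact Finset.sum_le_sum_of_subset (hCls_sub j)
    have hkey : (Cls j).card * (N + 1) ≤ 2 ^ (j + 1) * N := by
      calc (Cls j).card * (N + 1) = ∑ _tX ∈ Cls j, (N + 1) := by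
            rw [Finset.sum_const, smul_eq_mul]
        _ ≤ ∑ tX ∈ Cls j, 2 ^ (j + 1) * degT tX := by
            apply Finset.sum_le_sum
            intro tX htX
            obtain ⟨t, ht, rfl⟩ := Finset.mem_image.1 htX
            have ht' := Finset.mem_filter.1 ht
            have := hlt t ht'.1
            rw [ht'.2] at this
            omega
        _ = 2 ^ (j + 1) * ∑ tX ∈ Cls j, degT tX := by rw [Finset.mul_sum]
        _ ≤ 2 ^ (j + 1) * N := Nat.mul_le_mul_left _ hsum
    by_contra hcon
    push_neg at hcon
    have h1 : 2 ^ (j + 1) * (N + 1) ≤ (Cls j).card * (N + 1) :=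
      Nat.mul_le_mul_right _ hcon
    have h2 : 2 ^ (j + 1) * (N + 1) ≤ 2 ^ (j + 1) * N := le_trans h1 hkey
    have h3 : N + 1 ≤ N := Nat.le_of_mul_le_mul_left h2 (Nat.pow_pos two_pos)
    omega
  have hidx_lt : ∀ j, ∀ tX ∈ Cls j, idx j tX < (Cls j).card := by
    intro j tX h
    rw [hidxdef]
    simpa [Finset.length_toList] using
      List.idxOf_lt_length_iff.2 (Finset.mem_toList.2 h)
  have hidx_inj : ∀ j, ∀ a ∈ Cls j, ∀ b ∈ Cls j, idx j a = idx j b → a = b := by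
    intro j a ha b hb h
    exact (List.idxOf_inj (Finset.mem_toList.2 ha)).1 h
  refine ⟨2 * (L + 1),
    fun m => T.filter (fun t => bidx t = m.1 / 2 ∧
      (m.1 % 2 = 0 ↔ idx (m.1 / 2) (proj t) < 2 ^ (m.1 / 2))),
    le_rfl, ?_, ?_, ?_⟩
  · -- disjointness
    intro m m' hne
    rw [Finset.disjoint_left]
    intro t htm htm'
    obtain ⟨-, e1, e2⟩ := Finset.mem_filter.1 htm
    obtain ⟨-, e1', e2'⟩ := Finset.mem_filter.1 htm'
    have hdiv : m.1 / 2 = m'.1 / 2 := by omega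
    rw [hdiv] at e2
    have hmod : m.1 % 2 = m'.1 % 2 := by
      by_cases hc : idx (m'.1 / 2) (proj t) < 2 ^ (m'.1 / 2)
      · omega
      · omega
    exact hne (Fin.ext (by omega))
  · -- cover
    intro t
    constructor
    · intro ht
      have hj : bidx t ≤ L := hb_le t ht
      by_cases hc : idx (bidx t) (proj t) < 2 ^ (bidx t)
      · refine ⟨⟨2 * bidx t, by omega⟩, Finset.mem_filter.2 ⟨ht, ?_, ?_⟩⟩
        · show bidx t = 2 * bidx t / 2
          omega
        · show 2 * bidx t % 2 = 0 ↔
            idx (2 * bidx t / 2) (proj t) < 2 ^ (2 * bidx t / 2)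
          have h2 : 2 * bidx t / 2 = bidx t := by omega
          rw [h2]
          constructor <;> intro <;> [exact hc; omega]
      · refine ⟨⟨2 * bidx t + 1, by omega⟩, Finset.mem_filter.2 ⟨ht, ?_, ?_⟩⟩
        · show bidx t = (2 * bidx t + 1) / 2
          omega
        · show (2 * bidx t + 1) % 2 = 0 ↔
            idx ((2 * bidx t + 1) / 2) (proj t) < 2 ^ ((2 * bidx t + 1) / 2)
          have h2 : (2 * bidx t + 1) / 2 = bidx t := by omega
          rw [h2]
          constructor <;> intro h <;> [omega; exact absurd h hc]
    · rintro ⟨m, hm⟩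
      exact (Finset.mem_filter.1 hm).1
  · -- the product bound
    intro m
    set j := m.1 / 2 with hjdef
    set P := T.filter (fun t => bidx t = m.1 / 2 ∧
      (m.1 % 2 = 0 ↔ idx (m.1 / 2) (proj t) < 2 ^ (m.1 / 2))) with hPdef
    show (P.image proj).card * (P.image proj).sup
        (fun tX => (P.filter (fun s => proj s = tX)).card) ≤ N
    have hPsub : P ⊆ T := Finset.filter_subset _ _
    have hmemI : ∀ tX ∈ P.image proj, tX ∈ Cls j ∧
        (m.1 % 2 = 0 ↔ idx j tX < 2 ^ j) := by
      intro tX htX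
      obtain ⟨t, ht, rfl⟩ := Finset.mem_image.1 htX
      obtain ⟨htT, hb, hcond⟩ := Finset.mem_filter.1 ht
      exact ⟨Finset.mem_image_of_mem _ (Finset.mem_filter.2 ⟨htT, hb⟩), hcond⟩
    have hcard : (P.image proj).card ≤ 2 ^ j := by
      by_cases h0 : m.1 % 2 = 0
      · calc (P.image proj).card ≤ (Finset.range (2 ^ j)).card := by
              apply Finset.card_le_card_of_injOn (idx j)
              · intro tX htX
                exact Finset.mem_range.2 ((hmemI tX htX).2.1 h0)
              · intro a ha b hb hab
                exact hidx_inj j a (hmemI a ha).1 b (hmemI b hb).1 hab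
          _ = 2 ^ j := Finset.card_range _
      · calc (P.image proj).card ≤ (Finset.Ico (2 ^ j) (2 ^ (j + 1))).card := by
              apply Finset.card_le_card_of_injOn (idx j)
              · intro tX htX
                obtain ⟨hcls, hiff⟩ := hmemI tX htX
                refine Finset.mem_Ico.2 ⟨?_, ?_⟩
                · by_contra hlt'
                  exact h0 (hiff.2 (by omega))
                · exact lt_trans (hidx_lt j tX hcls) (hCls_lt j)
              · intro a ha b hb hab
                exact hidx_inj j a (hmemI a ha).1 b (hmemI b hb).1 hab
          _ ≤ 2 ^ j := by rw [Nat.card_Ico, pow_succ]; omega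
    have hsup : (P.image proj).sup
        (fun tX => (P.filter (fun s => proj s = tX)).card) ≤ N / 2 ^ j := by
      apply Finset.sup_le
      intro tX htX
      obtain ⟨t, ht, rfl⟩ := Finset.mem_image.1 htX
      obtain ⟨htT, hb, -⟩ := Finset.mem_filter.1 ht
      have h1 : (P.filter (fun s => proj s = proj t)).card ≤ degT (proj t) :=
        Finset.card_le_card (Finset.filter_subset_filter _ hPsub)
      have h2 : degT (proj t) * 2 ^ j ≤ N := by
        have := hmul_le t htT; rw [hb] at this; exact this
      have h3 : degT (proj t) ≤ N / 2 ^ j :=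
        (Nat.le_div_iff_mul_le (Nat.pow_pos two_pos)).2 h2
      exact le_trans h1 h3
    calc (P.image proj).card * (P.image proj).sup
          (fun tX => (P.filter (fun s => proj s = tX)).card)
        ≤ 2 ^ j * (N / 2 ^ j) := Nat.mul_le_mul hcard hsup
      _ ≤ N := by rw [mul_comm]; exact Nat.div_mul_le_self N (2 ^ j)
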